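/- arXiv:1809.02580 — 3 statements merged into one kernel-verified Lean document; each statement's English description precedes it below -/
import Mathlib

section
/- Let M be a nonempty compact smooth manifold without boundary (finite-dimensional, modelled on a real normed space), let V be a vector field on M (an assignment x ↦ V(x) ∈ T_xM), let β : M → ℝ be a function with β(x) ≠ 0 for every x ∈ M, and let f : M → ℝ be differentiable (MDifferentiable). If for every x ∈ M the derivative of f at x in the direction V(x) satisfies (df)_x(V(x)) + β(x)·f(x) = 0, then f is identically zero on M. -/
open Manifold Set Filter Topology

/-- At a local extremum on a boundaryless manifold, the manifold derivative of a
differentiable real-valued function vanishes. -/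
lemma mfderiv_eq_zero_of_isLocalMax
    {E : Type*} [NormedAddCommGroup E] [NormedSpace ℝ E]
    {H : Type*} [TopologicalSpace H] (I : ModelWithCorners ℝ E H)
    {M : Type*} [TopologicalSpace M] [ChartedSpace H M]
    [IsManifold I (⊤ : ℕ∞) M] [BoundarylessManifold I M]
    {f : M → ℝ} {x₀ : M} (hf : MDifferentiableAt I 𝓘(ℝ) f x₀)
    (hmax : IsLocalMax f x₀) : mfderiv I 𝓘(ℝ) f x₀ = 0 := by
  set e := extChartAt I x₀ with he
  have hrange : range I ∈ 𝓝 (e x₀) :=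
    range_mem_nhds_isInteriorPoint (BoundarylessManifold.isInteriorPoint (I := I))
  have hD : HasFDerivWithinAt (writtenInExtChartAt I 𝓘(ℝ) x₀ f)
      (mfderiv I 𝓘(ℝ) f x₀) (range I) (e x₀) := hf.hasMFDerivAt.2
  have hD' : HasFDerivAt (writtenInExtChartAt I 𝓘(ℝ) x₀ f)
      (mfderiv I 𝓘(ℝ) f x₀) (e x₀) := hD.hasFDerivAt hrange
  have hmap : Filter.map e.symm (𝓝 (e x₀)) = 𝓝 x₀ := by
    have := map_extChartAt_symm_nhdsWithin_range (I := I) x₀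
    rwa [nhdsWithin_eq_nhds.mpr hrange] at this
  have hval : ∀ z, writtenInExtChartAt I 𝓘(ℝ) x₀ f z = f (e.symm z) := by
    intro z; rfl
  have hgmax : IsLocalMax (writtenInExtChartAt I 𝓘(ℝ) x₀ f) (e x₀) := by
    have h1 : ∀ᶠ z in 𝓝 (e x₀), f (e.symm z) ≤ f x₀ := by
      have hmax' : ∀ᶠ y in 𝓝 x₀, f y ≤ f x₀ := hmax
      rw [← hmap, eventually_map] at hmax'
      exact hmax'
    filter_upwards [h1] with z hz
    rw [hval, hval, e.left_inv (mem_extChartAt_source x₀)]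
    exact hz
  exact hgmax.hasFDerivAt_eq_zero hD'

/-- scalar global maximum principle on a compact boundaryless manifold:
if `f` is differentiable on a nonempty compact smooth manifold `M` without boundary and
satisfies `df_x(V x) + β x * f x = 0` with `β` nowhere vanishing, then `f ≡ 0`. -/
theorem scalar_max_principle
    {E : Type*} [NormedAddCommGroup E] [NormedSpace ℝ E] [FiniteDimensional ℝ E]
    {H : Type*} [TopologicalSpace H] (I : ModelWithCorners ℝ E H)
    {M : Type*} [TopologicalSpace M] [ChartedSpace H M]
    [IsManifold I (⊤ : ℕ∞) M] [BoundarylessManifold I M]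
    [CompactSpace M] [Nonempty M]
    (V : (x : M) → TangentSpace I x)
    (β : M → ℝ) (hβ : ∀ x : M, β x ≠ 0)
    (f : M → ℝ) (hf : MDifferentiable I 𝓘(ℝ) f)
    (hode : ∀ x : M, (show ℝ from mfderiv I 𝓘(ℝ) f x (V x)) + β x * f x = 0) :
    ∀ x : M, f x = 0 := by
  have hcont : Continuous f := hf.continuous
  have key : ∀ y : M, IsLocalMax f y ∨ IsLocalMin f y → f y = 0 := by
    intro y hy
    have hder : mfderiv I 𝓘(ℝ) f y = 0 := by
      rcases hy with h | h
      · exact mfderiv_eq_zero_of_isLocalMax I (hf y) h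
      · have : mfderiv I 𝓘(ℝ) (fun x => -f x) y = 0 :=
          mfderiv_eq_zero_of_isLocalMax I ((hf y).neg) h.neg
        have hneg : mfderiv I 𝓘(ℝ) (fun x => -f x) y = -mfderiv I 𝓘(ℝ) f y :=
          mfderiv_neg (f := f) (x := y)
        rw [hneg] at this
        exact neg_eq_zero.mp this
    have := hode y
    rw [hder] at this
    change (0:ℝ) + β y * f y = 0 at this
    simp at this
    rcases this with h | h
    · exact absurd h (hβ y)
    · exact h
  obtain ⟨a, -, ha⟩ := isCompact_univ.exists_isMaxOn univ_nonempty hcont.continuousOn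
  obtain ⟨b, -, hb⟩ := isCompact_univ.exists_isMinOn univ_nonempty hcont.continuousOn
  have hfa : f a = 0 := key a (Or.inl (ha.isLocalMax Filter.univ_mem))
  have hfb : f b = 0 := key b (Or.inr (hb.isLocalMin Filter.univ_mem))
  intro x
  have h1 : f x ≤ 0 := hfa ▸ ha (mem_univ x)
  have h2 : 0 ≤ f x := hfb ▸ hb (mem_univ x)
  linarith
end

section
/- Let M be a compact smooth manifold without boundary (finite-dimensional, modelled on a real normed space), let V be a vector field on M, let β : M → ℝ be a function with β(x) ≠ 0 for every x ∈ M, let m ≥ 1, let C : M → Mat_{m×m}(ℝ) satisfy C(x)ᵀ = −C(x) for every x (pointwise skew-symmetric), and let A : M → Mat_{m×m}(ℝ) be differentiable with A(x)ᵀ = A(x) for every x (pointwise symmetric). Suppose that for every x ∈ M the directional derivative of A along V satisfies (dA)_x(V(x)) = −β(x)·A(x) + C(x)ᵀ·A(x) + A(x)·C(x). Then A is identically the zero matrix on M. -/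
open Manifold

section Aux

/-- Evaluation of a "matrix" `Fin m → Fin m → ℝ` at an entry, as a continuous linear map. -/
noncomputable def matEval (m : ℕ) (i j : Fin m) : (Fin m → Fin m → ℝ) →L[ℝ] ℝ :=
  (ContinuousLinearMap.proj (R := ℝ) (φ := fun _ : Fin m => ℝ) j).comp
    (ContinuousLinearMap.proj (R := ℝ) (φ := fun _ : Fin m => Fin m → ℝ) i)

@[simp] lemma matEval_apply (m : ℕ) (i j : Fin m) (N : Fin m → Fin m → ℝ) :
    matEval m i j N = N i j := rfl

lemma hasFDerivAt_sumsq (m : ℕ) (P : Fin m → Fin m → ℝ) :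
    HasFDerivAt (fun N : Fin m → Fin m → ℝ => ∑ i, ∑ j, N i j * N i j)
      (∑ i : Fin m, ∑ j : Fin m, (P i j • matEval m i j + P i j • matEval m i j)) P := by
  apply HasFDerivAt.fun_sum
  intro i _
  apply HasFDerivAt.fun_sum
  intro j _
  have h := ((matEval m i j).hasFDerivAt (x := P)).mul ((matEval m i j).hasFDerivAt (x := P))
  exact h

/-- An antisymmetric double sum vanishes. -/
lemma antisym_double_sum_eq_zero {m : ℕ} (h : Fin m → Fin m → ℝ)
    (hh : ∀ i k, h k i = - h i k) : ∑ i, ∑ k, h i k = 0 := by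
  have h1 : ∑ i, ∑ k, h i k = ∑ k, ∑ i, h i k := Finset.sum_comm
  have h2 : ∑ k, ∑ i, h i k = - ∑ k, ∑ i, h k i := by
    rw [← Finset.sum_neg_distrib]
    refine Finset.sum_congr rfl fun k _ => ?_
    rw [← Finset.sum_neg_distrib]
    exact Finset.sum_congr rfl fun i _ => by rw [hh k i]
  linarith [h1.trans h2]

/-- The mfderiv of a real-valued differentiable function on a boundaryless manifold
vanishes at a global maximum point. -/
lemma mfderiv_eq_zero_of_isMax
    {E : Type*} [NormedAddCommGroup E] [NormedSpace ℝ E]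
    {H : Type*} [TopologicalSpace H] {I : ModelWithCorners ℝ E H}
    {M : Type*} [TopologicalSpace M] [ChartedSpace H M]
    [BoundarylessManifold I M]
    {f : M → ℝ} {x : M} (hf : MDifferentiableAt I 𝓘(ℝ, ℝ) f x)
    (hmax : ∀ y, f y ≤ f x) :
    mfderiv I 𝓘(ℝ, ℝ) f x = 0 := by
  have hint : I.IsInteriorPoint x := BoundarylessManifold.isInteriorPoint
  have hrange : Set.range I ∈ nhds (extChartAt I x x) :=
    range_mem_nhds_isInteriorPoint hint
  set g : E → ℝ := writtenInExtChartAt I 𝓘(ℝ, ℝ) x f with hg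
  have hgmax : IsLocalMax g (extChartAt I x x) := by
    apply Filter.Eventually.of_forall
    intro y
    have h1 : g y = f ((extChartAt I x).symm y) := by
      simp [hg, writtenInExtChartAt, extChartAt_model_space_eq_id, chartAt_self_eq]
    have h2 : g (extChartAt I x x) = f x := by
      simp [hg, writtenInExtChartAt, extChartAt_model_space_eq_id, chartAt_self_eq]
    rw [h1, h2]
    exact hmax _
  have hzero : fderiv ℝ g (extChartAt I x x) = 0 := hgmax.fderiv_eq_zero
  rw [hf.mfderiv, ← hg, fderivWithin_of_mem_nhds hrange, hzero]
  rfl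

end Aux

/-- matrix form of the global maximum principle, Lemma 2.6 of the paper:
on a compact boundaryless manifold `M`, if the pointwise symmetric matrix-valued map `A`
(representing a symmetric 2-tensor in a local orthonormal frame) satisfies the ODE
`(dA)_x(V x) = -β x • A x + (C x)ᵀ * A x + A x * C x` along a vector field `V`,
where `β` is nowhere vanishing and `C` is pointwise skew-symmetric, then `A ≡ 0`.
Matrices are represented as elements of the (finite-dimensional normed space)
`Fin m → Fin m → ℝ`, with products written out explicitly. -/
theorem matrix_max_principle
    {E : Type*} [NormedAddCommGroup E] [NormedSpace ℝ E] [FiniteDimensional ℝ E]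
    {H : Type*} [TopologicalSpace H] (I : ModelWithCorners ℝ E H)
    {M : Type*} [TopologicalSpace M] [ChartedSpace H M]
    [IsManifold I (⊤ : ℕ∞) M] [BoundarylessManifold I M] [CompactSpace M]
    (V : (x : M) → TangentSpace I x)
    (β : M → ℝ) (hβ : ∀ x : M, β x ≠ 0)
    (m : ℕ) (hm : 1 ≤ m)
    (C : M → Fin m → Fin m → ℝ)
    (hC_skew : ∀ (x : M) (i j : Fin m), C x j i = - C x i j)
    (A : M → Fin m → Fin m → ℝ)
    (hA_diff : MDifferentiable I 𝓘(ℝ, Fin m → Fin m → ℝ) A)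
    (hA_symm : ∀ (x : M) (i j : Fin m), A x j i = A x i j)
    (hode : ∀ (x : M) (i j : Fin m),
      (show Fin m → Fin m → ℝ from
          mfderiv I 𝓘(ℝ, Fin m → Fin m → ℝ) A x (V x)) i j =
        - β x * A x i j + (∑ k, C x k i * A x k j) + ∑ k, A x i k * C x k j) :
    ∀ (x : M) (i j : Fin m), A x i j = 0 := by
  intro x₀ i₀ j₀
  haveI : Nonempty M := ⟨x₀⟩
  -- the squared norm function
  let f : M → ℝ := fun x => ∑ i, ∑ j, A x i j * A x i j
  -- `f` is differentiable with the expected derivative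
  have hfd : ∀ x : M, HasMFDerivAt I 𝓘(ℝ, ℝ) f x
      ((∑ i : Fin m, ∑ j : Fin m,
          (A x i j • matEval m i j + A x i j • matEval m i j)).comp
        (mfderiv I 𝓘(ℝ, Fin m → Fin m → ℝ) A x)) := by
    intro x
    have h : HasMFDerivAt I 𝓘(ℝ, ℝ)
        ((fun N : Fin m → Fin m → ℝ => ∑ i, ∑ j, N i j * N i j) ∘ A) x
        ((∑ i : Fin m, ∑ j : Fin m,
            (A x i j • matEval m i j + A x i j • matEval m i j)).comp
          (mfderiv I 𝓘(ℝ, Fin m → Fin m → ℝ) A x)) :=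
      HasMFDerivAt.comp x (hasFDerivAt_sumsq m (A x)).hasMFDerivAt
        ((hA_diff x).hasMFDerivAt)
    exact h
  have hfdiff : MDifferentiable I 𝓘(ℝ, ℝ) f := fun x => (hfd x).mdifferentiableAt
  -- the key ODE for `f` : mfderiv f x (V x) = -2 β x * f x
  have hkey : ∀ x : M, mfderiv I 𝓘(ℝ, ℝ) f x (V x) = -2 * β x * f x := by
    intro x
    rw [(hfd x).mfderiv]
    have hW : ∀ i j, (mfderiv I 𝓘(ℝ, Fin m → Fin m → ℝ) A x) (V x) i j =
        - β x * A x i j + (∑ k, C x k i * A x k j) + ∑ k, A x i k * C x k j :=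
      fun i j => hode x i j
    show (∑ i : Fin m, ∑ j : Fin m,
        (A x i j • matEval m i j + A x i j • matEval m i j))
          ((mfderiv I 𝓘(ℝ, Fin m → Fin m → ℝ) A x) (V x)) = -2 * β x * f x
    have hsum : ∀ W : Fin m → Fin m → ℝ, (∑ i : Fin m, ∑ j : Fin m,
        (A x i j • matEval m i j + A x i j • matEval m i j)) W
          = ∑ i : Fin m, ∑ j : Fin m, (A x i j * W i j + A x i j * W i j) := fun W => by
      simp only [ContinuousLinearMap.sum_apply, ContinuousLinearMap.add_apply,
        ContinuousLinearMap.smul_apply, matEval_apply, smul_eq_mul]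
    refine (hsum _).trans ?_
    have expand : ∑ i : Fin m, ∑ j : Fin m,
        (A x i j * (mfderiv I 𝓘(ℝ, Fin m → Fin m → ℝ) A x) (V x) i j
          + A x i j * (mfderiv I 𝓘(ℝ, Fin m → Fin m → ℝ) A x) (V x) i j)
        = (∑ i, ∑ j, 2 * A x i j * (- β x * A x i j))
          + (∑ i, ∑ j, ∑ k, 2 * A x i j * (C x k i * A x k j))
          + (∑ i, ∑ j, ∑ k, 2 * A x i j * (A x i k * C x k j)) := by
      rw [← Finset.sum_add_distrib, ← Finset.sum_add_distrib]
      refine Finset.sum_congr rfl fun i _ => ?_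
      rw [← Finset.sum_add_distrib, ← Finset.sum_add_distrib]
      refine Finset.sum_congr rfl fun j _ => ?_
      rw [hW i j, ← Finset.mul_sum, ← Finset.mul_sum]
      ring
    rw [expand]
    have hS1 : (∑ i, ∑ j, ∑ k, 2 * A x i j * (C x k i * A x k j)) = 0 := by
      have swap : ∀ i : Fin m, (∑ j, ∑ k, 2 * A x i j * (C x k i * A x k j))
          = ∑ k, ∑ j, 2 * A x i j * (C x k i * A x k j) := fun i => Finset.sum_comm
      calc (∑ i, ∑ j, ∑ k, 2 * A x i j * (C x k i * A x k j))
          = ∑ i, ∑ k, ∑ j, 2 * A x i j * (C x k i * A x k j) :=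
            Finset.sum_congr rfl fun i _ => swap i
        _ = 0 := by
            apply antisym_double_sum_eq_zero
              (h := fun i k => ∑ j, 2 * A x i j * (C x k i * A x k j))
            intro i k
            rw [← Finset.sum_neg_distrib]
            refine Finset.sum_congr rfl fun j _ => ?_
            rw [hC_skew x k i]
            ring
    have hS2 : (∑ i, ∑ j, ∑ k, 2 * A x i j * (A x i k * C x k j)) = 0 := by
      refine Finset.sum_eq_zero fun i _ => ?_
      apply antisym_double_sum_eq_zero (h := fun j k => 2 * A x i j * (A x i k * C x k j))
      intro j k
      rw [hC_skew x k j]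
      ring
    rw [hS1, hS2, add_zero, add_zero]
    show _ = -2 * β x * ∑ i : Fin m, ∑ j : Fin m, A x i j * A x i j
    simp only [Finset.mul_sum]
    exact Finset.sum_congr rfl fun i _ => Finset.sum_congr rfl fun j _ => by ring
  -- global maximum point
  obtain ⟨z, -, hz⟩ := isCompact_univ.exists_isMaxOn Set.univ_nonempty
    hfdiff.continuous.continuousOn
  have hzmax : ∀ y, f y ≤ f z := fun y => hz (Set.mem_univ y)
  have h0 : mfderiv I 𝓘(ℝ, ℝ) f z = 0 := mfderiv_eq_zero_of_isMax (hfdiff z) hzmax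
  have hzero : -2 * β z * f z = 0 := by
    rw [← hkey z, h0]
    simp
    rfl
  have hbf : β z * f z = 0 := by linarith
  have hfz : f z = 0 := (mul_eq_zero.mp hbf).resolve_left (hβ z)
  have hfnonneg : ∀ y, (0:ℝ) ≤ f y := fun y =>
    Finset.sum_nonneg fun i _ => Finset.sum_nonneg fun j _ => mul_self_nonneg _
  have hf0 : f x₀ = 0 := le_antisymm (hfz ▸ hzmax x₀) (hfnonneg x₀)
  have h1 : ∀ i ∈ Finset.univ, (∑ j, A x₀ i j * A x₀ i j) = 0 :=
    (Finset.sum_eq_zero_iff_of_nonneg fun i _ =>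
      Finset.sum_nonneg fun j _ => mul_self_nonneg _).mp hf0
  have h2 : A x₀ i₀ j₀ * A x₀ i₀ j₀ = 0 :=
    (Finset.sum_eq_zero_iff_of_nonneg fun j _ => mul_self_nonneg _).mp
      (h1 i₀ (Finset.mem_univ i₀)) j₀ (Finset.mem_univ j₀)
  exact mul_self_eq_zero.mp h2
end

section
/- With the coordinate conventions below, for every smooth vector field V on U and all indices a, b: (ℒ_V Ric)_{ab} = (∇_e R_{ab} − ∇_a R_{be} − ∇_b R_{ae})·V^e + (ℒ_{Ric♯(V)♯} g)_{ab}, at every point of U, where (ℒ_{Ric♯(V)♯} g)_{ab} := ∇_a (Ric♯(V))_b + ∇_b (Ric♯(V))_a. (This is identity (A.5)/(eq: LRab) in the appendix of the paper, an intermediate step in the proof of the key wave-equation identity for ℒ_V g.) -/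
open scoped ContDiff

noncomputable section CoordinateGeometry

/-- The partial derivative `∂_a f` of a scalar function `f` on `ℝⁿ` in the `a`-th
coordinate direction. -/
def pd {n : ℕ} (a : Fin n) (f : (Fin n → ℝ) → ℝ) (x : Fin n → ℝ) : ℝ :=
  fderiv ℝ f x (Pi.single a 1)

variable {n : ℕ} (g : (Fin n → ℝ) → Fin n → Fin n → ℝ)

/-- The entries `g^{ab}` of the pointwise inverse matrix of the metric `g_{ab}`. -/
def ginv (x : Fin n → ℝ) (a b : Fin n) : ℝ :=
  (Matrix.of (g x))⁻¹ a b

/-- The Christoffel symbols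
`Γ^c_{ab} = ½ g^{cd}(∂_a g_{bd} + ∂_b g_{ad} − ∂_d g_{ab})`. -/
def Γ' (c a b : Fin n) (x : Fin n → ℝ) : ℝ :=
  (1 / 2) * ∑ d, ginv g x c d *
    (pd a (fun y => g y b d) x + pd b (fun y => g y a d) x - pd d (fun y => g y a b) x)

/-- The covariant derivative `∇_a ω_b = ∂_a ω_b − Γ^c_{ab} ω_c` of a one-form. -/
def cd1 (w : Fin n → (Fin n → ℝ) → ℝ) (a b : Fin n) (x : Fin n → ℝ) : ℝ :=
  pd a (w b) x - ∑ c, Γ' g c a b x * w c x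

/-- The covariant derivative `∇_a u_{bc} = ∂_a u_{bc} − Γ^d_{ab} u_{dc} − Γ^d_{ac} u_{bd}`
of a covariant 2-tensor. -/
def cd2 (u : Fin n → Fin n → (Fin n → ℝ) → ℝ) (a b c : Fin n) (x : Fin n → ℝ) : ℝ :=
  pd a (u b c) x - ∑ d, Γ' g d a b x * u d c x - ∑ d, Γ' g d a c x * u b d x

/-- The covariant derivative of a covariant 3-tensor. -/
def cd3 (u : Fin n → Fin n → Fin n → (Fin n → ℝ) → ℝ) (a b c d : Fin n)
    (x : Fin n → ℝ) : ℝ :=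
  pd a (u b c d) x - ∑ e, Γ' g e a b x * u e c d x
    - ∑ e, Γ' g e a c x * u b e d x - ∑ e, Γ' g e a d x * u b c e x

/-- The Riemann curvature tensor `R_{abc}{}^d`, characterised by
`∇_a ∇_b ω_c − ∇_b ∇_a ω_c = R_{abc}{}^d ω_d` for every smooth one-form `ω`; in
coordinates `R_{abc}{}^d = ∂_b Γ^d_{ac} − ∂_a Γ^d_{bc} + Γ^e_{ac} Γ^d_{be} − Γ^e_{bc} Γ^d_{ae}`. -/
def Riem (a b c d : Fin n) (x : Fin n → ℝ) : ℝ :=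
  pd b (Γ' g d a c) x - pd a (Γ' g d b c) x
    + ∑ e, Γ' g e a c x * Γ' g d b e x - ∑ e, Γ' g e b c x * Γ' g d a e x

/-- The Ricci tensor `R_{ac} := R_{abc}{}^b`. -/
def Ricci (a c : Fin n) (x : Fin n → ℝ) : ℝ :=
  ∑ b, Riem g a b c b x

/-- The Ricci tensor with second index raised, `R_a{}^b := g^{bd} R_{ad}`. -/
def RicciUp (a b : Fin n) (x : Fin n → ℝ) : ℝ :=
  ∑ d, ginv g x b d * Ricci g a d x

/-- The lowered components `V_a := g_{ab} V^b` of a vector field. -/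
def low (V : Fin n → (Fin n → ℝ) → ℝ) (a : Fin n) (x : Fin n → ℝ) : ℝ :=
  ∑ b, g x a b * V b x

/-- The Lie derivative of the metric, `(ℒ_V g)_{ab} := ∇_a V_b + ∇_b V_a`. -/
def lieG (V : Fin n → (Fin n → ℝ) → ℝ) (a b : Fin n) (x : Fin n → ℝ) : ℝ :=
  cd1 g (low g V) a b x + cd1 g (low g V) b a x

/-- The divergence `div(V) := ∇_a V^a = ∂_a V^a + Γ^a_{ac} V^c`. -/
def divV (V : Fin n → (Fin n → ℝ) → ℝ) (x : Fin n → ℝ) : ℝ :=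
  ∑ a, (pd a (V a) x + ∑ c, Γ' g a a c x * V c x)

/-- The wave operator on a vector field (as a one-form),
`(□V)_a := −g^{cd} ∇_c ∇_d V_a`. -/
def boxV (V : Fin n → (Fin n → ℝ) → ℝ) (a : Fin n) (x : Fin n → ℝ) : ℝ :=
  - ∑ c, ∑ d, ginv g x c d * cd2 g (fun d a => cd1 g (low g V) d a) c d a x

/-- The divergence `(div u)_b := g^{ac} ∇_a u_{cb}` of a covariant 2-tensor. -/
def divT (u : Fin n → Fin n → (Fin n → ℝ) → ℝ) (b : Fin n) (x : Fin n → ℝ) : ℝ :=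
  ∑ a, ∑ c, ginv g x a c * cd2 g u a c b x

/-- `(Ric♯(V))_a := R_a{}^b V_b`. -/
def ricSharp (V : Fin n → (Fin n → ℝ) → ℝ) (a : Fin n) (x : Fin n → ℝ) : ℝ :=
  ∑ b, RicciUp g a b x * low g V b x

/-- The wave operator on a covariant 2-tensor, `(□u)_{ab} := −g^{cd} ∇_c ∇_d u_{ab}`. -/
def boxT (u : Fin n → Fin n → (Fin n → ℝ) → ℝ) (a b : Fin n) (x : Fin n → ℝ) : ℝ :=
  - ∑ c, ∑ d, ginv g x c d * cd3 g (fun c d e => cd2 g u c d e) c d a b x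

/-- `Riem(u)_{ab} := R_a{}^c{}_b{}^d u_{cd} = g^{ce} R_{aeb}{}^d u_{cd}`. -/
def riemOf (u : Fin n → Fin n → (Fin n → ℝ) → ℝ) (a b : Fin n) (x : Fin n → ℝ) : ℝ :=
  ∑ c, ∑ d, ∑ e, ginv g x c e * Riem g a e b d x * u c d x

/-- `(ℒ_{ω♯} g)_{ab} := ∇_a ω_b + ∇_b ω_a` for a one-form `ω`. -/
def lieSharpG (w : Fin n → (Fin n → ℝ) → ℝ) (a b : Fin n) (x : Fin n → ℝ) : ℝ :=
  cd1 g w a b x + cd1 g w b a x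

/-- `(ℒ_V Ric)_{ab} := V^c ∂_c R_{ab} + R_{cb} ∂_a V^c + R_{ac} ∂_b V^c`. -/
def lieRic (V : Fin n → (Fin n → ℝ) → ℝ) (a b : Fin n) (x : Fin n → ℝ) : ℝ :=
  ∑ c, V c x * pd c (Ricci g a b) x
    + ∑ c, Ricci g c b x * pd a (V c) x
    + ∑ c, Ricci g a c x * pd b (V c) x

/-- The covariant derivative `∇_f R_{eab}{}^c` of the Riemann `(3,1)`-tensor. -/
def cdRiem (f e a b c : Fin n) (x : Fin n → ℝ) : ℝ :=
  pd f (Riem g e a b c) x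
    - ∑ d, Γ' g d f e x * Riem g d a b c x
    - ∑ d, Γ' g d f a x * Riem g e d b c x
    - ∑ d, Γ' g d f b x * Riem g e a d c x
    + ∑ d, Γ' g c f d x * Riem g e a b d x

end CoordinateGeometry

section LieAux
open Filter Topology

variable {n : ℕ}

lemma pd_congr_nhds {f h : (Fin n → ℝ) → ℝ} {x : Fin n → ℝ} (hfh : f =ᶠ[nhds x] h) (a : Fin n) :
    pd a f x = pd a h x := by
  unfold pd; rw [hfh.fderiv_eq]

lemma pd_congr_on {U : Set (Fin n → ℝ)} (hU : IsOpen U) {f h : (Fin n → ℝ) → ℝ}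
    (hfh : ∀ y ∈ U, f y = h y) {x : Fin n → ℝ} (hx : x ∈ U) (a : Fin n) :
    pd a f x = pd a h x :=
  pd_congr_nhds (Filter.eventuallyEq_of_mem (hU.mem_nhds hx) hfh) a

lemma pd_add {f h : (Fin n → ℝ) → ℝ} {x : Fin n → ℝ} (hf : DifferentiableAt ℝ f x)
    (hh : DifferentiableAt ℝ h x) (a : Fin n) :
    pd a (fun y => f y + h y) x = pd a f x + pd a h x := by
  unfold pd; rw [fderiv_fun_add hf hh]; rfl

lemma pd_sub {f h : (Fin n → ℝ) → ℝ} {x : Fin n → ℝ} (hf : DifferentiableAt ℝ f x)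
    (hh : DifferentiableAt ℝ h x) (a : Fin n) :
    pd a (fun y => f y - h y) x = pd a f x - pd a h x := by
  unfold pd; rw [fderiv_fun_sub hf hh]; rfl

lemma pd_mul {f h : (Fin n → ℝ) → ℝ} {x : Fin n → ℝ} (hf : DifferentiableAt ℝ f x)
    (hh : DifferentiableAt ℝ h x) (a : Fin n) :
    pd a (fun y => f y * h y) x = pd a f x * h x + f x * pd a h x := by
  unfold pd; rw [fderiv_fun_mul hf hh]; simp [mul_comm]; ring

lemma pd_sum {ι : Type*} (s : Finset ι) (f : ι → (Fin n → ℝ) → ℝ) {x : Fin n → ℝ}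
    (hf : ∀ i ∈ s, DifferentiableAt ℝ (f i) x) (a : Fin n) :
    pd a (fun y => ∑ i ∈ s, f i y) x = ∑ i ∈ s, pd a (f i) x := by
  unfold pd; rw [fderiv_fun_sum hf]; simp

lemma pd_const_mul {f : (Fin n → ℝ) → ℝ} {x : Fin n → ℝ} (c : ℝ)
    (hf : DifferentiableAt ℝ f x) (a : Fin n) :
    pd a (fun y => c * f y) x = c * pd a f x := by
  unfold pd; rw [fderiv_const_mul hf]; rfl

lemma contDiffOn_pd {U : Set (Fin n → ℝ)} (hU : IsOpen U) {f : (Fin n → ℝ) → ℝ}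
    (hf : ContDiffOn ℝ ∞ f U) (a : Fin n) : ContDiffOn ℝ ∞ (pd a f) U := by
  have h1 : ContDiffOn ℝ ∞ (fun y => fderivWithin ℝ f U y) U :=
    hf.fderivWithin hU.uniqueDiffOn (by simp)
  exact (h1.clm_apply contDiffOn_const).congr fun y hy => by
    unfold pd; rw [fderivWithin_of_isOpen hU hy]

lemma diffAt_of_cdOn {U : Set (Fin n → ℝ)} (hU : IsOpen U) {f : (Fin n → ℝ) → ℝ}
    (hf : ContDiffOn ℝ ∞ f U) {x : Fin n → ℝ} (hx : x ∈ U) : DifferentiableAt ℝ f x :=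
  (hf.contDiffAt (hU.mem_nhds hx)).differentiableAt (by simp)

lemma pd_comm {U : Set (Fin n → ℝ)} (hU : IsOpen U) {f : (Fin n → ℝ) → ℝ}
    (hf : ContDiffOn ℝ ∞ f U) {x : Fin n → ℝ} (hx : x ∈ U) (a c : Fin n) :
    pd a (pd c f) x = pd c (pd a f) x := by
  have hfx : ContDiffAt ℝ ∞ f x := hf.contDiffAt (hU.mem_nhds hx)
  have hsymm := hfx.isSymmSndFDerivAt (by simp [minSmoothness_of_isRCLikeNormedField]; exact WithTop.coe_le_coe.mpr le_top)
  have hd : DifferentiableAt ℝ (fderiv ℝ f) x :=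
    (hfx.fderiv_right (m := ∞) (by simp)).differentiableAt (by simp)
  have key : ∀ v w : Fin n → ℝ,
      fderiv ℝ (fun y => fderiv ℝ f y w) x v = fderiv ℝ (fderiv ℝ f) x v w := by
    intro v w
    have : (fun y => fderiv ℝ f y w)
        = fun y => (ContinuousLinearMap.apply ℝ ℝ w) (fderiv ℝ f y) := rfl
    rw [this, fderiv_clm_apply (differentiableAt_const _) hd]
    simp
  unfold pd
  rw [key, key, hsymm]
variable {U : Set (Fin n → ℝ)} {g : (Fin n → ℝ) → Fin n → Fin n → ℝ}

lemma contDiffOn_det (hU : IsOpen U) (M : (Fin n → ℝ) → Matrix (Fin n) (Fin n) ℝ)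
    (hM : ∀ a b : Fin n, ContDiffOn ℝ ∞ (fun y => M y a b) U) :
    ContDiffOn ℝ ∞ (fun y => (M y).det) U := by
  have h : ∀ y, (M y).det
      = ∑ σ : Equiv.Perm (Fin n), ((Equiv.Perm.sign σ : ℤ) : ℝ) * ∏ i, M y (σ i) i := by
    intro y
    rw [Matrix.det_apply]
    congr 1; funext σ
    rw [Units.smul_def, zsmul_eq_mul]
  simp only [h]
  exact ContDiffOn.sum fun σ _ =>
    contDiffOn_const.mul (contDiffOn_prod fun i _ => hM (σ i) i)

lemma contDiffOn_ginv (hU : IsOpen U)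
    (hg_smooth : ∀ a b : Fin n, ContDiffOn ℝ ∞ (fun x => g x a b) U)
    (hg_inv : ∀ x ∈ U, IsUnit (Matrix.of (g x)).det) (a b : Fin n) :
    ContDiffOn ℝ ∞ (fun y => ginv g y a b) U := by
  have hdet : ContDiffOn ℝ ∞ (fun y => (Matrix.of (g y)).det) U :=
    contDiffOn_det hU _ hg_smooth
  have hadj : ContDiffOn ℝ ∞ (fun y => (Matrix.of (g y)).adjugate a b) U := by
    simp only [Matrix.adjugate_apply]
    refine contDiffOn_det hU _ fun c d => ?_
    simp only [Matrix.updateRow_apply]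
    by_cases hc : c = b
    · simp only [hc, if_true, if_pos rfl]; exact contDiffOn_const
    · simp only [hc, if_false]; exact hg_smooth c d
  have hne : ∀ y ∈ U, (Matrix.of (g y)).det ≠ 0 := fun y hy => (hg_inv y hy).ne_zero
  have : ∀ y, ginv g y a b = ((Matrix.of (g y)).det)⁻¹ * (Matrix.of (g y)).adjugate a b := by
    intro y
    rw [ginv, Matrix.inv_def, Matrix.smul_apply, Ring.inverse_eq_inv', smul_eq_mul]
  simp only [this]
  exact (hdet.inv hne).mul hadj

lemma ginv_mul_g (hg_inv : ∀ x ∈ U, IsUnit (Matrix.of (g x)).det)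
    {x : Fin n → ℝ} (hx : x ∈ U) (a b : Fin n) :
    ∑ c, ginv g x a c * g x c b = if a = b then 1 else 0 := by
  have h := Matrix.nonsing_inv_mul (Matrix.of (g x)) (hg_inv x hx)
  have h2 := congrFun (congrFun h a) b
  rw [Matrix.mul_apply] at h2
  simpa [ginv, Matrix.one_apply] using h2

lemma g_mul_ginv (hg_inv : ∀ x ∈ U, IsUnit (Matrix.of (g x)).det)
    {x : Fin n → ℝ} (hx : x ∈ U) (a b : Fin n) :
    ∑ c, g x a c * ginv g x c b = if a = b then 1 else 0 := by
  have h := Matrix.mul_nonsing_inv (Matrix.of (g x)) (hg_inv x hx)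
  have h2 := congrFun (congrFun h a) b
  rw [Matrix.mul_apply] at h2
  simpa [ginv, Matrix.one_apply] using h2

lemma ginv_symm (hg_symm : ∀ x ∈ U, ∀ a b : Fin n, g x a b = g x b a)
    {x : Fin n → ℝ} (hx : x ∈ U) (a b : Fin n) :
    ginv g x a b = ginv g x b a := by
  have hT : (Matrix.of (g x)).transpose = Matrix.of (g x) := by
    ext i j; exact hg_symm x hx j i
  have := Matrix.transpose_nonsing_inv (A := Matrix.of (g x))
  rw [hT] at this
  have h2 := congrFun (congrFun this a) b
  simpa [ginv, Matrix.transpose_apply] using h2.symm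

lemma contDiffOn_Γ (hU : IsOpen U)
    (hg_smooth : ∀ a b : Fin n, ContDiffOn ℝ ∞ (fun x => g x a b) U)
    (hg_inv : ∀ x ∈ U, IsUnit (Matrix.of (g x)).det) (c a b : Fin n) :
    ContDiffOn ℝ ∞ (Γ' g c a b) U := by
  unfold Γ'
  refine contDiffOn_const.mul (ContDiffOn.sum fun d _ => ?_)
  exact (contDiffOn_ginv hU hg_smooth hg_inv c d).mul
    (((contDiffOn_pd hU (hg_smooth b d) a).add (contDiffOn_pd hU (hg_smooth a d) b)).sub
      (contDiffOn_pd hU (hg_smooth a b) d))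

lemma contDiffOn_Riem (hU : IsOpen U)
    (hg_smooth : ∀ a b : Fin n, ContDiffOn ℝ ∞ (fun x => g x a b) U)
    (hg_inv : ∀ x ∈ U, IsUnit (Matrix.of (g x)).det) (a b c d : Fin n) :
    ContDiffOn ℝ ∞ (Riem g a b c d) U := by
  unfold Riem
  have hΓ := contDiffOn_Γ (g := g) hU hg_smooth hg_inv
  exact ((((contDiffOn_pd hU (hΓ d a c) b).sub (contDiffOn_pd hU (hΓ d b c) a)).add
    (ContDiffOn.sum fun e _ => (hΓ e a c).mul (hΓ d b e))).sub
    (ContDiffOn.sum fun e _ => (hΓ e b c).mul (hΓ d a e)))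

lemma contDiffOn_Ricci (hU : IsOpen U)
    (hg_smooth : ∀ a b : Fin n, ContDiffOn ℝ ∞ (fun x => g x a b) U)
    (hg_inv : ∀ x ∈ U, IsUnit (Matrix.of (g x)).det) (a c : Fin n) :
    ContDiffOn ℝ ∞ (Ricci g a c) U := by
  unfold Ricci
  exact ContDiffOn.sum fun b _ => contDiffOn_Riem hU hg_smooth hg_inv a b c b
lemma pd_const {x : Fin n → ℝ} (c : ℝ) (a : Fin n) : pd a (fun _ => c) x = 0 := by
  unfold pd; rw [fderiv_fun_const]; simp

lemma Γ_symm (hU : IsOpen U) (hg_symm : ∀ x ∈ U, ∀ a b : Fin n, g x a b = g x b a)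
    {x : Fin n → ℝ} (hx : x ∈ U) (c a b : Fin n) : Γ' g c a b x = Γ' g c b a x := by
  unfold Γ'
  congr 1
  refine Finset.sum_congr rfl fun d _ => ?_
  rw [pd_congr_on hU (fun y hy => hg_symm y hy a b) hx d]
  ring

lemma pd_ginv (hU : IsOpen U)
    (hg_smooth : ∀ a b : Fin n, ContDiffOn ℝ ∞ (fun x => g x a b) U)
    (hg_inv : ∀ x ∈ U, IsUnit (Matrix.of (g x)).det)
    {x : Fin n → ℝ} (hx : x ∈ U) (e a b : Fin n) :
    pd e (fun y => ginv g y a b) x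
      = -∑ p, ∑ q, ginv g x a p * pd e (fun y => g y p q) x * ginv g x q b := by
  have hdg : ∀ p q : Fin n, DifferentiableAt ℝ (fun y => g y p q) x :=
    fun p q => diffAt_of_cdOn hU (hg_smooth p q) hx
  have hdinv : ∀ p q : Fin n, DifferentiableAt ℝ (fun y => ginv g y p q) x :=
    fun p q => diffAt_of_cdOn hU (contDiffOn_ginv hU hg_smooth hg_inv p q) hx
  have key : ∀ q : Fin n,
      ∑ c, (pd e (fun y => ginv g y a c) x * g x c q
        + ginv g x a c * pd e (fun y => g y c q) x) = 0 := by
    intro q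
    have h1 : pd e (fun y => ∑ c, ginv g y a c * g y c q) x
        = pd e (fun _ => if a = q then (1:ℝ) else 0) x :=
      pd_congr_on hU (fun y hy => ginv_mul_g hg_inv hy a q) hx e
    rw [pd_const] at h1
    rw [pd_sum _ _ (fun c _ => (hdinv a c).fun_mul (hdg c q))] at h1
    rw [← h1]
    exact Finset.sum_congr rfl fun c _ => (pd_mul (hdinv a c) (hdg c q) e).symm
  have step2 : ∀ q : Fin n, (∑ c, pd e (fun y => ginv g y a c) x * g x c q)
      = -∑ c, ginv g x a c * pd e (fun y => g y c q) x := by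
    intro q
    have h := key q
    rw [Finset.sum_add_distrib] at h
    linarith
  have step1 : pd e (fun y => ginv g y a b) x
      = ∑ q, (∑ c, pd e (fun y => ginv g y a c) x * g x c q) * ginv g x q b := by
    have hgm : ∀ c : Fin n, (∑ q, g x c q * ginv g x q b) = if c = b then 1 else 0 :=
      fun c => g_mul_ginv hg_inv hx c b
    calc pd e (fun y => ginv g y a b) x
        = ∑ c, pd e (fun y => ginv g y a c) x * (if c = b then (1:ℝ) else 0) := by
          simp [mul_ite]
      _ = ∑ c, pd e (fun y => ginv g y a c) x * (∑ q, g x c q * ginv g x q b) := by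
          simp only [hgm]
      _ = ∑ q, (∑ c, pd e (fun y => ginv g y a c) x * g x c q) * ginv g x q b := by
          simp only [Finset.mul_sum, Finset.sum_mul]
          rw [Finset.sum_comm]
          exact Finset.sum_congr rfl fun q _ => Finset.sum_congr rfl fun c _ => by ring
  rw [step1]
  simp only [step2, neg_mul, Finset.sum_neg_distrib, Finset.sum_mul, neg_inj]
  rw [Finset.sum_comm]
lemma sum4_swap (f : Fin n → Fin n → Fin n → Fin n → ℝ) :
    ∑ b, ∑ d, ∑ p, ∑ q, f b d p q = ∑ b, ∑ d, ∑ p, ∑ q, f p q b d := by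
  have h : ∀ gf : Fin n × Fin n → Fin n × Fin n → ℝ,
      ∑ x : Fin n × Fin n, ∑ y : Fin n × Fin n, gf x y = ∑ x, ∑ y, gf y x :=
    fun gf => Finset.sum_comm
  have := h (fun x y => f x.1 x.2 y.1 y.2)
  simpa [Fintype.sum_prod_type] using this

lemma traceΓ (hU : IsOpen U) (hg_symm : ∀ x ∈ U, ∀ a b : Fin n, g x a b = g x b a)
    {y : Fin n → ℝ} (hy : y ∈ U) (c : Fin n) :
    ∑ b, Γ' g b b c y
      = (1/2) * ∑ b, ∑ d, ginv g y b d * pd c (fun z => g z b d) y := by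
  unfold Γ'
  rw [← Finset.mul_sum]
  congr 1
  have swap : ∑ b, ∑ d, ginv g y b d * pd b (fun z => g z c d) y
      = ∑ b, ∑ d, ginv g y b d * pd d (fun z => g z b c) y := by
    rw [Finset.sum_comm]
    refine Finset.sum_congr rfl fun b _ => Finset.sum_congr rfl fun d _ => ?_
    rw [ginv_symm hg_symm hy d b, pd_congr_on hU (fun z hz => hg_symm z hz c b) hy d]
  simp only [mul_add, mul_sub, Finset.sum_add_distrib, Finset.sum_sub_distrib]
  rw [swap]
  ring

lemma pdF_symm (hU : IsOpen U)
    (hg_smooth : ∀ a b : Fin n, ContDiffOn ℝ ∞ (fun x => g x a b) U)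
    (hg_symm : ∀ x ∈ U, ∀ a b : Fin n, g x a b = g x b a)
    (hg_inv : ∀ x ∈ U, IsUnit (Matrix.of (g x)).det)
    {x : Fin n → ℝ} (hx : x ∈ U) (a c : Fin n) :
    pd a (fun y => (1/2) * ∑ b, ∑ d, ginv g y b d * pd c (fun z => g z b d) y) x
      = pd c (fun y => (1/2) * ∑ b, ∑ d, ginv g y b d * pd a (fun z => g z b d) y) x := by
  have D1 : ∀ b d : Fin n, DifferentiableAt ℝ (fun y => ginv g y b d) x :=
    fun b d => diffAt_of_cdOn hU (contDiffOn_ginv hU hg_smooth hg_inv b d) hx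
  have D2 : ∀ (e b d : Fin n), DifferentiableAt ℝ (fun y => pd e (fun z => g z b d) y) x :=
    fun e b d => diffAt_of_cdOn hU (contDiffOn_pd hU (hg_smooth b d) e) hx
  have main : ∀ e e' : Fin n,
      pd e (fun y => (1/2) * ∑ b, ∑ d, ginv g y b d * pd e' (fun z => g z b d) y) x
        = (1/2) * ∑ b, ∑ d, (pd e (fun y => ginv g y b d) x * pd e' (fun z => g z b d) x
            + ginv g x b d * pd e (pd e' (fun z => g z b d)) x) := by
    intro e e'
    rw [pd_const_mul _ (DifferentiableAt.fun_sum fun b _ =>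
      DifferentiableAt.fun_sum fun d _ => (D1 b d).fun_mul (D2 e' b d))]
    congr 1
    rw [pd_sum _ _ (fun b _ => DifferentiableAt.fun_sum fun d _ => (D1 b d).fun_mul (D2 e' b d))]
    refine Finset.sum_congr rfl fun b _ => ?_
    rw [pd_sum _ _ (fun d _ => (D1 b d).fun_mul (D2 e' b d))]
    exact Finset.sum_congr rfl fun d _ => pd_mul (D1 b d) (D2 e' b d) e
  rw [main a c, main c a]
  congr 1
  simp only [Finset.sum_add_distrib]
  congr 1
  -- first: the ∂ginv * ∂g part, via pd_ginv and the 4-sum relabelling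
  · have X : ∀ e e' : Fin n,
        ∑ b, ∑ d, pd e (fun y => ginv g y b d) x * pd e' (fun z => g z b d) x
          = ∑ b, ∑ d, ∑ p, ∑ q, -(ginv g x b p * pd e (fun z => g z p q) x
              * ginv g x q d * pd e' (fun z => g z b d) x) := by
      intro e e'
      refine Finset.sum_congr rfl fun b _ => Finset.sum_congr rfl fun d _ => ?_
      rw [pd_ginv hU hg_smooth hg_inv hx e b d]
      simp only [neg_mul, Finset.sum_mul, Finset.sum_neg_distrib]
    rw [X a c, X c a, sum4_swap]
    refine Finset.sum_congr rfl fun b _ => Finset.sum_congr rfl fun d _ =>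
      Finset.sum_congr rfl fun p _ => Finset.sum_congr rfl fun q _ => ?_
    rw [ginv_symm hg_symm hx p b, ginv_symm hg_symm hx d q]
    ring
  -- second: the ginv * ∂∂g part, via Schwarz
  · refine Finset.sum_congr rfl fun b _ => Finset.sum_congr rfl fun d _ => ?_
    rw [pd_comm hU (hg_smooth b d) hx a c]

lemma Ricci_symm (hU : IsOpen U)
    (hg_smooth : ∀ a b : Fin n, ContDiffOn ℝ ∞ (fun x => g x a b) U)
    (hg_symm : ∀ x ∈ U, ∀ a b : Fin n, g x a b = g x b a)
    (hg_inv : ∀ x ∈ U, IsUnit (Matrix.of (g x)).det)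
    {x : Fin n → ℝ} (hx : x ∈ U) (a c : Fin n) :
    Ricci g a c x = Ricci g c a x := by
  have hΓ := contDiffOn_Γ (g := g) hU hg_smooth hg_inv
  have DΓ : ∀ e a' b' : Fin n, DifferentiableAt ℝ (Γ' g e a' b') x :=
    fun e a' b' => diffAt_of_cdOn hU (hΓ e a' b') hx
  unfold Ricci Riem
  simp only [Finset.sum_add_distrib, Finset.sum_sub_distrib]
  have G1 : ∑ b, pd b (Γ' g b a c) x = ∑ b, pd b (Γ' g b c a) x :=
    Finset.sum_congr rfl fun b _ =>
      pd_congr_on hU (fun y hy => Γ_symm hU hg_symm hy b a c) hx b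
  have G2 : ∑ b, pd a (Γ' g b b c) x = ∑ b, pd c (Γ' g b b a) x := by
    have e1 : ∑ b, pd a (Γ' g b b c) x = pd a (fun y => ∑ b, Γ' g b b c y) x :=
      (pd_sum _ _ (fun b _ => DΓ b b c) a).symm
    have e2 : ∑ b, pd c (Γ' g b b a) x = pd c (fun y => ∑ b, Γ' g b b a y) x :=
      (pd_sum _ _ (fun b _ => DΓ b b a) c).symm
    rw [e1, e2,
      pd_congr_on hU (fun y hy => traceΓ hU hg_symm hy c) hx a,
      pd_congr_on hU (fun y hy => traceΓ hU hg_symm hy a) hx c]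
    exact pdF_symm hU hg_smooth hg_symm hg_inv hx a c
  have G3 : ∑ b, ∑ e, Γ' g e a c x * Γ' g b b e x
      = ∑ b, ∑ e, Γ' g e c a x * Γ' g b b e x := by
    refine Finset.sum_congr rfl fun b _ => Finset.sum_congr rfl fun e _ => ?_
    rw [Γ_symm hU hg_symm hx e a c]
  have G4 : ∑ b, ∑ e, Γ' g e b c x * Γ' g b a e x
      = ∑ b, ∑ e, Γ' g e b a x * Γ' g b c e x := by
    rw [Finset.sum_comm]
    refine Finset.sum_congr rfl fun b _ => Finset.sum_congr rfl fun e _ => ?_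
    rw [Γ_symm hU hg_symm hx b e c, Γ_symm hU hg_symm hx e a b,
      Γ_symm hU hg_symm hx b c e, Γ_symm hU hg_symm hx e b a]
    ring
  rw [G1, G2, G3, G4]
lemma sum3_rot (f : Fin n → Fin n → Fin n → ℝ) :
    ∑ b, ∑ d, ∑ e, f b d e = ∑ d, ∑ e, ∑ b, f b d e := by
  rw [Finset.sum_comm]
  exact Finset.sum_congr rfl fun d _ => Finset.sum_comm

lemma ricSharp_eq (hg_symm : ∀ x ∈ U, ∀ a b : Fin n, g x a b = g x b a)
    (hg_inv : ∀ x ∈ U, IsUnit (Matrix.of (g x)).det)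
    (V : Fin n → (Fin n → ℝ) → ℝ) {y : Fin n → ℝ} (hy : y ∈ U) (a : Fin n) :
    ricSharp g V a y = ∑ d, Ricci g a d y * V d y := by
  unfold ricSharp RicciUp low
  calc ∑ b, (∑ d, ginv g y b d * Ricci g a d y) * (∑ e, g y b e * V e y)
      = ∑ b, ∑ d, ∑ e, (ginv g y b d * Ricci g a d y) * (g y b e * V e y) := by
        exact Finset.sum_congr rfl fun b _ => Finset.sum_mul_sum _ _ _ _
    _ = ∑ d, ∑ e, ∑ b, (ginv g y b d * Ricci g a d y) * (g y b e * V e y) := sum3_rot _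
    _ = ∑ d, ∑ e, (∑ b, g y e b * ginv g y b d) * (Ricci g a d y * V e y) := by
        refine Finset.sum_congr rfl fun d _ => Finset.sum_congr rfl fun e _ => ?_
        rw [Finset.sum_mul]
        refine Finset.sum_congr rfl fun b _ => ?_
        rw [hg_symm y hy e b]; ring
    _ = ∑ d, ∑ e, (if e = d then (1:ℝ) else 0) * (Ricci g a d y * V e y) := by
        simp only [g_mul_ginv hg_inv hy]
    _ = ∑ d, Ricci g a d y * V d y := by
        simp [ite_mul]

end LieAux

/-- identity (A.5)/(eq: LRab) of the paper: for every smooth vector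
field `V` on `U` and all indices `a`, `b`,
`(ℒ_V Ric)_{ab} = (∇_e R_{ab} − ∇_a R_{be} − ∇_b R_{ae})·V^e + (ℒ_{Ric♯(V)♯} g)_{ab}`
holds at every point of `U`. -/
theorem lieRic_identity {n : ℕ} (hn : 1 ≤ n)
    (U : Set (Fin n → ℝ)) (hU : IsOpen U)
    (g : (Fin n → ℝ) → Fin n → Fin n → ℝ)
    (hg_smooth : ∀ a b : Fin n, ContDiffOn ℝ ∞ (fun x => g x a b) U)
    (hg_symm : ∀ x ∈ U, ∀ a b : Fin n, g x a b = g x b a)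
    (hg_inv : ∀ x ∈ U, IsUnit (Matrix.of (g x)).det)
    (V : Fin n → (Fin n → ℝ) → ℝ)
    (hV : ∀ a : Fin n, ContDiffOn ℝ ∞ (V a) U) :
    ∀ x ∈ U, ∀ a b : Fin n,
      lieRic g V a b x
        = (∑ e, (cd2 g (Ricci g) e a b x - cd2 g (Ricci g) a b e x
              - cd2 g (Ricci g) b a e x) * V e x)
          + lieSharpG g (ricSharp g V) a b x := by
  intro x hx a b
  have DRic : ∀ p q : Fin n, DifferentiableAt ℝ (Ricci g p q) x :=
    fun p q => diffAt_of_cdOn hU (contDiffOn_Ricci hU hg_smooth hg_inv p q) hx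
  have DV : ∀ e : Fin n, DifferentiableAt ℝ (V e) x :=
    fun e => diffAt_of_cdOn hU (hV e) hx
  -- covariant derivative of (Ric♯ V) lowered, expanded
  have H1 : ∀ p q : Fin n, cd1 g (ricSharp g V) p q x
      = ∑ e, pd p (Ricci g q e) x * V e x + ∑ e, Ricci g q e x * pd p (V e) x
        - ∑ c, ∑ e, (Γ' g c p q x * Ricci g c e x) * V e x := by
    intro p q
    unfold cd1
    rw [pd_congr_on hU (fun y hy => ricSharp_eq hg_symm hg_inv V hy q) hx p]
    rw [pd_sum _ _ (fun e _ => (DRic q e).fun_mul (DV e))]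
    have e1 : ∑ e, pd p (fun y => Ricci g q e y * V e y) x
        = ∑ e, (pd p (Ricci g q e) x * V e x + Ricci g q e x * pd p (V e) x) :=
      Finset.sum_congr rfl fun e _ => pd_mul (DRic q e) (DV e) p
    have e2 : ∑ c, Γ' g c p q x * ricSharp g V c x
        = ∑ c, ∑ e, (Γ' g c p q x * Ricci g c e x) * V e x := by
      refine Finset.sum_congr rfl fun c _ => ?_
      rw [ricSharp_eq hg_symm hg_inv V hx c, Finset.mul_sum]
      exact Finset.sum_congr rfl fun e _ => by ring
    rw [e1, e2, Finset.sum_add_distrib]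
  -- the cd2 combination, with the Γ·Ric cancellations
  have K1 : ∑ e, (cd2 g (Ricci g) e a b x - cd2 g (Ricci g) a b e x
        - cd2 g (Ricci g) b a e x) * V e x
      = ∑ e, pd e (Ricci g a b) x * V e x
        - ∑ e, pd a (Ricci g b e) x * V e x
        - ∑ e, pd b (Ricci g a e) x * V e x
        + ∑ e, ∑ d, (Γ' g d a b x * Ricci g d e x) * V e x
        + ∑ e, ∑ d, (Γ' g d b a x * Ricci g d e x) * V e x := by
    have per_e : ∀ e : Fin n, (cd2 g (Ricci g) e a b x - cd2 g (Ricci g) a b e x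
          - cd2 g (Ricci g) b a e x) * V e x
        = pd e (Ricci g a b) x * V e x
          - pd a (Ricci g b e) x * V e x
          - pd b (Ricci g a e) x * V e x
          + ∑ d, (Γ' g d a b x * Ricci g d e x) * V e x
          + ∑ d, (Γ' g d b a x * Ricci g d e x) * V e x := by
      intro e
      have c1 : ∑ d, Γ' g d e a x * Ricci g d b x
          = ∑ d, Γ' g d a e x * Ricci g b d x := by
        refine Finset.sum_congr rfl fun d _ => ?_
        rw [Γ_symm hU hg_symm hx d e a, Ricci_symm hU hg_smooth hg_symm hg_inv hx d b]
      have c2 : ∑ d, Γ' g d e b x * Ricci g a d x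
          = ∑ d, Γ' g d b e x * Ricci g a d x := by
        refine Finset.sum_congr rfl fun d _ => ?_
        rw [Γ_symm hU hg_symm hx d e b]
      unfold cd2
      rw [c1, c2]
      simp only [sub_mul, add_mul, Finset.sum_mul]
      ring
    rw [Finset.sum_congr rfl fun e _ => per_e e]
    simp only [Finset.sum_add_distrib, Finset.sum_sub_distrib]
  -- reorder the double sums from H1
  have sc1 : ∑ c, ∑ e, (Γ' g c a b x * Ricci g c e x) * V e x
      = ∑ e, ∑ d, (Γ' g d a b x * Ricci g d e x) * V e x := Finset.sum_comm
  have sc2 : ∑ c, ∑ e, (Γ' g c b a x * Ricci g c e x) * V e x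
      = ∑ e, ∑ d, (Γ' g d b a x * Ricci g d e x) * V e x := Finset.sum_comm
  -- matching the remaining single sums with lieRic
  have m1 : ∑ e, pd e (Ricci g a b) x * V e x = ∑ c, V c x * pd c (Ricci g a b) x :=
    Finset.sum_congr rfl fun c _ => by ring
  have m2 : ∑ e, Ricci g b e x * pd a (V e) x = ∑ c, Ricci g c b x * pd a (V c) x :=
    Finset.sum_congr rfl fun c _ => by
      rw [Ricci_symm hU hg_smooth hg_symm hg_inv hx b c]
  unfold lieRic lieSharpG
  rw [K1, H1 a b, H1 b a, sc1, sc2, m1, m2]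
  ring
end
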